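/- arXiv:1505.05740 — 2 statements merged into one kernel-verified Lean document; each statement's English description precedes it below -/
import Mathlib

section
/- Let V1, V2, E1, E2 be finite types with head and tail maps s1, t1 : E1 → V1 and s2, t2 : E2 → V2. Let x : V1 → V2 → ℝ and y : E1 → E2 → ℝ be binary (every value is 0 or 1), and suppose the edge-budget constraint holds: for every ij ∈ E1, ∑_{kl ∈ E2} y ij kl ≤ 1. Then the following are equivalent: (a) for all ij ∈ E1 and kl ∈ E2, y ij kl ≤ x (s1 ij) (s2 kl) and y ij kl ≤ x (t1 ij) (t2 kl); (b) for all ij ∈ E1 and k ∈ V2, ∑_{kl ∈ E2 with s2 kl = k} y ij kl ≤ x (s1 ij) k, and for all ij ∈ E1 and l ∈ V2, ∑_{kl ∈ E2 with t2 kl = l} y ij kl ≤ x (t1 ij) l. (Proposition 2: the pointwise topological constraints (7)-(8) and the aggregated topological constraints (13)-(14) define the same set of admissible solutions.) -/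
open Finset

lemma aux_fwd {E2 V2 : Type*} [Fintype E2] [DecidableEq V2]
    (f : E2 → V2) (g : E2 → ℝ) (c : ℝ) (k : V2)
    (hg : ∀ kl, g kl = 0 ∨ g kl = 1)
    (hc : c = 0 ∨ c = 1)
    (hbudget : ∑ kl : E2, g kl ≤ 1)
    (hpt : ∀ kl, f kl = k → g kl ≤ c) :
    ∑ kl ∈ Finset.univ.filter (fun kl : E2 => f kl = k), g kl ≤ c := by
  rcases hc with h | h
  · rw [h]
    apply Finset.sum_nonpos
    intro kl hkl
    simp only [Finset.mem_filter] at hkl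
    have := hpt kl hkl.2
    linarith [this, h ▸ this]
  · rw [h]
    calc ∑ kl ∈ Finset.univ.filter (fun kl : E2 => f kl = k), g kl
        ≤ ∑ kl : E2, g kl := by
          apply Finset.sum_le_sum_of_subset_of_nonneg (Finset.filter_subset _ _)
          intro kl _ _
          rcases hg kl with h' | h' <;> simp [h']
      _ ≤ 1 := hbudget

/-- Proposition 2: for binary variables satisfying the edge-budget constraint,
the pointwise topological constraints (7)-(8) are equivalent to the aggregated
topological constraints (13)-(14). -/
theorem prop2_equiv_constraints
    (V1 V2 E1 E2 : Type*) [Fintype V1] [Fintype V2] [Fintype E1] [Fintype E2] [DecidableEq V2]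
    (s1 t1 : E1 → V1) (s2 t2 : E2 → V2)
    (x : V1 → V2 → ℝ) (y : E1 → E2 → ℝ)
    (hx : ∀ i k, x i k = 0 ∨ x i k = 1)
    (hy : ∀ ij kl, y ij kl = 0 ∨ y ij kl = 1)
    (hbudget : ∀ ij : E1, ∑ kl : E2, y ij kl ≤ 1) :
    (∀ (ij : E1) (kl : E2),
        y ij kl ≤ x (s1 ij) (s2 kl) ∧ y ij kl ≤ x (t1 ij) (t2 kl)) ↔
    ((∀ (ij : E1) (k : V2),
        ∑ kl ∈ Finset.univ.filter (fun kl : E2 => s2 kl = k), y ij kl ≤ x (s1 ij) k) ∧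
     (∀ (ij : E1) (l : V2),
        ∑ kl ∈ Finset.univ.filter (fun kl : E2 => t2 kl = l), y ij kl ≤ x (t1 ij) l)) := by
  constructor
  · intro h
    refine ⟨fun ij k => ?_, fun ij l => ?_⟩
    · exact aux_fwd s2 (y ij) _ k (hy ij) (hx _ _) (hbudget ij)
        (fun kl hkl => hkl ▸ (h ij kl).1)
    · exact aux_fwd t2 (y ij) _ l (hy ij) (hx _ _) (hbudget ij)
        (fun kl hkl => hkl ▸ (h ij kl).2)
  · rintro ⟨h1, h2⟩ ij kl
    have hnn : ∀ m : E2, 0 ≤ y ij m := fun m => by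
      rcases hy ij m with h | h <;> simp [h]
    constructor
    · refine le_trans ?_ (h1 ij (s2 kl))
      exact Finset.single_le_sum (fun m _ => hnn m) (by simp)
    · refine le_trans ?_ (h2 ij (t2 kl))
      exact Finset.single_le_sum (fun m _ => hnn m) (by simp)
end

section
/- Let V1, V2, E1, E2 be finite types with head and tail maps s1, t1 : E1 → V1 and s2, t2 : E2 → V2, and suppose G1 is simple, i.e. the map ij ↦ (s1 ij, t1 ij) from E1 to V1 × V1 is injective. Let x : V1 → V2 → ℝ and y : E1 → E2 → ℝ be binary (every value is 0 or 1) and satisfy: for every k ∈ V2, ∑_{i ∈ V1} x i k ≤ 1; for every ij ∈ E1 and every k ∈ V2, ∑_{kl ∈ E2 with s2 kl = k} y ij kl ≤ x (s1 ij) k; and for every ij ∈ E1 and every l ∈ V2, ∑_{kl ∈ E2 with t2 kl = l} y ij kl ≤ x (t1 ij) l. Then for every kl ∈ E2, ∑_{ij ∈ E1} y ij kl ≤ 1. (The remaining edge-matching constraint (sumy2b) of formulation F1 is implied by the constraints kept in the reduced formulation F2, so F2 describes the same set of edit paths.) -/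
open Finset

/-- The remaining edge-matching constraint (sumy2b) of F1 is implied by the
constraints kept in the reduced formulation F2, when G1 is simple. -/
theorem sumy2b_from_F2_constraints
    (V1 V2 E1 E2 : Type*) [Fintype V1] [Fintype V2] [Fintype E1] [Fintype E2] [DecidableEq V2]
    (s1 t1 : E1 → V1) (s2 t2 : E2 → V2)
    (hsimple : Function.Injective (fun ij : E1 => (s1 ij, t1 ij)))
    (x : V1 → V2 → ℝ) (y : E1 → E2 → ℝ)
    (hx : ∀ i k, x i k = 0 ∨ x i k = 1)
    (hy : ∀ ij kl, y ij kl = 0 ∨ y ij kl = 1)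
    (hvx : ∀ k : V2, ∑ i : V1, x i k ≤ 1)
    (hhead : ∀ (ij : E1) (k : V2),
        ∑ kl ∈ Finset.univ.filter (fun kl : E2 => s2 kl = k), y ij kl ≤ x (s1 ij) k)
    (htail : ∀ (ij : E1) (l : V2),
        ∑ kl ∈ Finset.univ.filter (fun kl : E2 => t2 kl = l), y ij kl ≤ x (t1 ij) l) :
    ∀ kl : E2, ∑ ij : E1, y ij kl ≤ 1 := by
  classical
  intro kl
  have hy0 : ∀ ij e, 0 ≤ y ij e := fun ij e => by rcases hy ij e with h | h <;> simp [h]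
  -- if two distinct vertices both take value 1 at k, contradict hvx
  have hxone : ∀ (i i' : V1) (k : V2), i ≠ i' → x i k = 1 → x i' k = 1 → False := by
    intro i i' k hne h1 h2
    have hsub : ({i, i'} : Finset V1) ⊆ Finset.univ := Finset.subset_univ _
    have hpair : ∑ j ∈ ({i, i'} : Finset V1), x j k = 2 := by
      rw [Finset.sum_pair hne, h1, h2]; norm_num
    have hle : ∑ j ∈ ({i, i'} : Finset V1), x j k ≤ ∑ j : V1, x j k := by
      apply Finset.sum_le_sum_of_subset_of_nonneg hsub
      intro j _ _
      rcases hx j k with h | h <;> simp [h]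
    have := hvx k
    linarith [hpair ▸ hle]
  -- any ij with y ij kl = 1 forces x values to be 1
  have key : ∀ ij : E1, y ij kl = 1 →
      x (s1 ij) (s2 kl) = 1 ∧ x (t1 ij) (t2 kl) = 1 := by
    intro ij h1
    constructor
    · have hmem : kl ∈ Finset.univ.filter (fun kl' : E2 => s2 kl' = s2 kl) := by simp
      have hle : y ij kl ≤ ∑ kl' ∈ Finset.univ.filter (fun kl' : E2 => s2 kl' = s2 kl), y ij kl' :=
        Finset.single_le_sum (fun e _ => hy0 ij e) hmem
      have := hhead ij (s2 kl)
      rcases hx (s1 ij) (s2 kl) with h | h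
      · rw [h] at this; linarith
      · exact h
    · have hmem : kl ∈ Finset.univ.filter (fun kl' : E2 => t2 kl' = t2 kl) := by simp
      have hle : y ij kl ≤ ∑ kl' ∈ Finset.univ.filter (fun kl' : E2 => t2 kl' = t2 kl), y ij kl' :=
        Finset.single_le_sum (fun e _ => hy0 ij e) hmem
      have := htail ij (t2 kl)
      rcases hx (t1 ij) (t2 kl) with h | h
      · rw [h] at this; linarith
      · exact h
  -- the set of ij with y ij kl = 1 has at most one element
  set S := Finset.univ.filter (fun ij : E1 => y ij kl = 1) with hS
  have hcard : S.card ≤ 1 := by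
    apply Finset.card_le_one.mpr
    intro a ha b hb
    simp only [hS, Finset.mem_filter] at ha hb
    obtain ⟨has, hat⟩ := key a ha.2
    obtain ⟨hbs, hbt⟩ := key b hb.2
    by_contra hne
    have hs : s1 a = s1 b := by
      by_contra h; exact hxone _ _ _ h has hbs
    have ht : t1 a = t1 b := by
      by_contra h; exact hxone _ _ _ h hat hbt
    exact hne (hsimple (by simp [hs, ht]))
  have hsum : ∑ ij : E1, y ij kl = S.card := by
    rw [← Finset.sum_filter_add_sum_filter_not Finset.univ (fun ij => y ij kl = 1) (fun ij => y ij kl)]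
    have h2 : ∑ ij ∈ Finset.univ.filter (fun ij : E1 => ¬ y ij kl = 1), y ij kl = 0 := by
      apply Finset.sum_eq_zero
      intro ij hij
      simp only [Finset.mem_filter] at hij
      rcases hy ij kl with h | h
      · exact h
      · exact absurd h hij.2
    have h1 : ∑ ij ∈ S, y ij kl = S.card := by
      rw [Finset.sum_congr rfl (fun ij hij => (Finset.mem_filter.mp hij).2)]
      simp [hS]
    rw [h1, h2, add_zero]
  rw [hsum]
  exact_mod_cast Nat.cast_le.mpr hcard
end
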